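/- arXiv:1610.02175 — 2 statements merged into one kernel-verified Lean document; each statement's English description precedes it below -/
import Mathlib

section
/- Let G be a finite simple graph and T(G) its total graph, whose vertices are V(G) ∪ E(G), two being adjacent iff they are adjacent or incident in G. Then F(T(G)) = 8·F(G) + ξ₄(G) + 3·ReZG₃(G). -/
open SimpleGraph Finset
open scoped Classical

noncomputable section
namespace Paper

variable {V : Type*} [Fintype V]

/-- Degree as an integer. -/
def d (G : SimpleGraph V) (v : V) : ℤ := G.degree v

/-- Number of edges. -/
def m (G : SimpleGraph V) : ℤ := G.edgeFinset.card

/-- Sum over unordered edges of a symmetric vertex-pair function. -/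
def edgeSum (G : SimpleGraph V) (f : V → V → ℤ) (hf : ∀ u v, f u v = f v u) : ℤ :=
  ∑ e ∈ G.edgeFinset, Sym2.lift ⟨f, hf⟩ e

/-- First Zagreb index. -/
def M1 (G : SimpleGraph V) : ℤ := ∑ v, d G v ^ 2

/-- Second Zagreb index. -/
def M2 (G : SimpleGraph V) : ℤ :=
  edgeSum G (fun u v => d G u * d G v) (by intros; ring)

/-- F-index. -/
def F (G : SimpleGraph V) : ℤ := ∑ v, d G v ^ 3

/-- ξ₄. -/
def xi4 (G : SimpleGraph V) : ℤ := ∑ v, d G v ^ 4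

/-- Redefined third Zagreb index. -/
def ReZG3 (G : SimpleGraph V) : ℤ :=
  edgeSum G (fun u v => d G u * d G v * (d G u + d G v)) (by intros; ring)

/-- F-coindex: sum over edges of the complement with degrees in G. -/
def Fbar (G : SimpleGraph V) : ℤ :=
  edgeSum Gᶜ (fun u v => d G u ^ 2 + d G v ^ 2) (by intros; ring)

/-- Subdivision graph. -/
def subdivision (G : SimpleGraph V) : SimpleGraph (V ⊕ G.edgeSet) where
  Adj x y :=
    match x, y with
    | Sum.inl u, Sum.inr e => u ∈ (e : Sym2 V)
    | Sum.inr e, Sum.inl u => u ∈ (e : Sym2 V)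
    | _, _ => False
  symm := by constructor; rintro (u | e) (v | f) h <;> first | exact h | exact h.elim
  loopless := by constructor; rintro (u | e) <;> simp

/-- Vertex-semitotal graph. -/
def vertexSemitotal (G : SimpleGraph V) : SimpleGraph (V ⊕ G.edgeSet) where
  Adj x y :=
    match x, y with
    | Sum.inl u, Sum.inl v => G.Adj u v
    | Sum.inl u, Sum.inr e => u ∈ (e : Sym2 V)
    | Sum.inr e, Sum.inl u => u ∈ (e : Sym2 V)
    | _, _ => False
  symm := by
    constructor
    rintro (u | e) (v | f) h
    · exact G.adj_symm h
    · exact h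
    · exact h
    · exact h.elim
  loopless := by
    constructor
    rintro (u | e) h
    · exact G.irrefl h
    · exact h

/-- Edge-semitotal graph. -/
def edgeSemitotal (G : SimpleGraph V) : SimpleGraph (V ⊕ G.edgeSet) where
  Adj x y :=
    match x, y with
    | Sum.inl u, Sum.inr e => u ∈ (e : Sym2 V)
    | Sum.inr e, Sum.inl u => u ∈ (e : Sym2 V)
    | Sum.inr e, Sum.inr f => e ≠ f ∧ ∃ v, v ∈ (e : Sym2 V) ∧ v ∈ (f : Sym2 V)
    | _, _ => False
  symm := by
    constructor
    rintro (u | e) (v | f) h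
    · exact h.elim
    · exact h
    · exact h
    · obtain ⟨hne, w, h1, h2⟩ := h
      exact ⟨hne.symm, w, h2, h1⟩
  loopless := by
    constructor
    rintro (u | e) h
    · exact h
    · exact h.1 rfl

/-- Total graph. -/
def total (G : SimpleGraph V) : SimpleGraph (V ⊕ G.edgeSet) where
  Adj x y :=
    match x, y with
    | Sum.inl u, Sum.inl v => G.Adj u v
    | Sum.inl u, Sum.inr e => u ∈ (e : Sym2 V)
    | Sum.inr e, Sum.inl u => u ∈ (e : Sym2 V)
    | Sum.inr e, Sum.inr f => e ≠ f ∧ ∃ v, v ∈ (e : Sym2 V) ∧ v ∈ (f : Sym2 V)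
  symm := by
    constructor
    rintro (u | e) (v | f) h
    · exact G.adj_symm h
    · exact h
    · exact h
    · obtain ⟨hne, w, h1, h2⟩ := h
      exact ⟨hne.symm, w, h2, h1⟩
  loopless := by
    constructor
    rintro (u | e) h
    · exact G.irrefl h
    · exact h.1 rfl

/-- Paraline graph: line graph of the subdivision graph. -/
def paraline (G : SimpleGraph V) : SimpleGraph (subdivision G).edgeSet :=
  (subdivision G).lineGraph


lemma deg_int {W : Type*} [Fintype W] (H : SimpleGraph W) (x : W) :
    (H.degree x : ℤ) = ∑ y, if H.Adj x y then 1 else 0 := by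
  classical
  rw [← SimpleGraph.card_neighborFinset_eq_degree, neighborFinset_eq_filter, card_filter]
  push_cast [Finset.sum_ite]
  simp

lemma inc_count (G : SimpleGraph V) (u : V) :
    ∑ e ∈ G.edgeFinset, (if u ∈ e then (1:ℤ) else 0) = G.degree u := by
  classical
  rw [← Finset.sum_filter, Finset.sum_const, ← incidenceFinset_eq_filter,
    card_incidenceFinset_eq_degree]
  simp

lemma edge_vertex_sum (G : SimpleGraph V) (g : V → ℤ) :
    ∑ e ∈ G.edgeFinset, (∑ w, if w ∈ e then g w else 0) = ∑ w, (G.degree w : ℤ) * g w := by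
  classical
  rw [Finset.sum_comm]
  refine Finset.sum_congr rfl fun w _ => ?_
  rw [← Finset.sum_filter, Finset.sum_const, ← incidenceFinset_eq_filter,
    card_incidenceFinset_eq_degree]
  simp [mul_comm]

lemma pair_sum (g : V → ℤ) (u v : V) (h : u ≠ v) :
    (∑ w, if w ∈ s(u,v) then g w else 0) = g u + g v := by
  classical
  simp only [Sym2.mem_iff]
  have key : ∀ x, (if x = u ∨ x = v then g x else 0)
      = (if x = u then g x else 0) + (if x = v then g x else 0) := by
    intro x; by_cases h1 : x = u <;> by_cases h2 : x = v <;> simp_all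
  simp [key, Finset.sum_add_distrib, Finset.sum_ite_eq']

lemma sum_edgeSet (G : SimpleGraph V) (g : Sym2 V → ℤ) :
    (∑ f : G.edgeSet, g f.1) = ∑ f ∈ G.edgeFinset, g f := by
  rw [SimpleGraph.edgeFinset]
  exact Finset.sum_set_coe _

lemma deg_total_inl (G : SimpleGraph V) (u : V) :
    d (total G) (Sum.inl u) = 2 * d G u := by
  classical
  rw [d, deg_int, Fintype.sum_sum_type]
  have h1 : (∑ v : V, if (total G).Adj (Sum.inl u) (Sum.inl v) then (1:ℤ) else 0)
      = d G u := by
    rw [d, deg_int]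
    exact Finset.sum_congr rfl fun v _ => if_congr Iff.rfl rfl rfl
  have h2 : (∑ e : G.edgeSet, if (total G).Adj (Sum.inl u) (Sum.inr e) then (1:ℤ) else 0)
      = d G u := by
    have step : ∀ e : G.edgeSet, (if (total G).Adj (Sum.inl u) (Sum.inr e) then (1:ℤ) else 0)
        = if u ∈ (e : Sym2 V) then (1:ℤ) else 0 := fun e => if_congr Iff.rfl rfl rfl
    rw [Finset.sum_congr rfl fun e _ => step e,
      sum_edgeSet G (fun s => if u ∈ s then (1:ℤ) else 0), inc_count]
    rfl
  rw [h1, h2]; ring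

lemma deg_total_inr (G : SimpleGraph V) (u v : V) (h : G.Adj u v)
    (e : G.edgeSet) (he : (e : Sym2 V) = s(u,v)) :
    d (total G) (Sum.inr e) = d G u + d G v := by
  classical
  have huv : u ∈ (e : Sym2 V) := by rw [he]; exact Sym2.mem_mk_left u v
  have hvv : v ∈ (e : Sym2 V) := by rw [he]; exact Sym2.mem_mk_right u v
  rw [d, deg_int, Fintype.sum_sum_type]
  have h1 : (∑ w : V, if (total G).Adj (Sum.inr e) (Sum.inl w) then (1:ℤ) else 0) = 2 := by
    have step : ∀ w : V, (if (total G).Adj (Sum.inr e) (Sum.inl w) then (1:ℤ) else 0)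
        = (if w ∈ s(u,v) then (1:ℤ) else 0) := by
      intro w
      exact if_congr (by rw [show (total G).Adj (Sum.inr e) (Sum.inl w) ↔ w ∈ (e : Sym2 V)
        from Iff.rfl, he]) rfl rfl
    rw [Finset.sum_congr rfl fun w _ => step w, pair_sum (fun _ => (1:ℤ)) u v h.ne]
    norm_num
  have h2 : (∑ f : G.edgeSet, if (total G).Adj (Sum.inr e) (Sum.inr f) then (1:ℤ) else 0)
      = d G u + d G v - 2 := by
    have step : ∀ f : G.edgeSet, (if (total G).Adj (Sum.inr e) (Sum.inr f) then (1:ℤ) else 0)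
        = ((if u ∈ (f : Sym2 V) then (1:ℤ) else 0) - (if (f : Sym2 V) = s(u,v) then (1:ℤ) else 0))
        + ((if v ∈ (f : Sym2 V) then (1:ℤ) else 0)
            - (if (f : Sym2 V) = s(u,v) then (1:ℤ) else 0)) := by
      intro f
      have hadj : (total G).Adj (Sum.inr e) (Sum.inr f)
          ↔ e ≠ f ∧ ∃ w, w ∈ (e : Sym2 V) ∧ w ∈ (f : Sym2 V) := Iff.rfl
      rw [if_congr hadj rfl rfl]
      by_cases hef : (f : Sym2 V) = s(u,v)
      · have heq : e = f := Subtype.ext (by rw [he, hef])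
        rw [if_neg (by rintro ⟨hne, _⟩; exact hne heq),
          if_pos (show u ∈ (f : Sym2 V) by rw [hef]; exact Sym2.mem_mk_left u v),
          if_pos (show v ∈ (f : Sym2 V) by rw [hef]; exact Sym2.mem_mk_right u v),
          if_pos hef]
        ring
      · have hne : e ≠ f := fun hc => hef (by rw [← hc, he])
        rw [if_neg hef]
        by_cases hu : u ∈ (f : Sym2 V) <;> by_cases hv : v ∈ (f : Sym2 V)
        · exact absurd ((Sym2.mem_and_mem_iff h.ne).mp ⟨hu, hv⟩) hef
        · rw [if_pos ⟨hne, u, huv, hu⟩, if_pos hu, if_neg hv]; ring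
        · rw [if_pos ⟨hne, v, hvv, hv⟩, if_neg hu, if_pos hv]; ring
        · rw [if_neg, if_neg hu, if_neg hv]
          · ring
          · rintro ⟨_, w, hw1, hw2⟩
            rw [he, Sym2.mem_iff] at hw1
            rcases hw1 with rfl | rfl
            · exact hu hw2
            · exact hv hw2
    rw [Finset.sum_congr rfl fun f _ => step f,
      sum_edgeSet G (fun s => ((if u ∈ s then (1:ℤ) else 0) - (if s = s(u,v) then (1:ℤ) else 0))
        + ((if v ∈ s then (1:ℤ) else 0) - (if s = s(u,v) then (1:ℤ) else 0)))]
    have hmem : s(u,v) ∈ G.edgeFinset := by rw [mem_edgeFinset]; exact h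
    rw [Finset.sum_add_distrib, Finset.sum_sub_distrib, Finset.sum_sub_distrib,
      inc_count, inc_count, Finset.sum_ite_eq' G.edgeFinset s(u,v) (fun _ => (1:ℤ)),
      if_pos hmem]
    rw [d, d]; ring
  rw [h1, h2]; ring


lemma sum_inr_cubes (G : SimpleGraph V) :
    (∑ e : G.edgeSet, d (total G) (Sum.inr e) ^ 3)
      = ∑ e ∈ G.edgeFinset,
          ((∑ w, if w ∈ e then d G w ^ 3 else 0)
            + 3 * Sym2.lift ⟨fun a b => d G a * d G b * (d G a + d G b), by intros; ring⟩ e) := by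
  classical
  have key : ∀ e : G.edgeSet, d (total G) (Sum.inr e) ^ 3
      = (fun s : Sym2 V => (∑ w, if w ∈ s then d G w ^ 3 else 0)
          + 3 * Sym2.lift ⟨fun a b => d G a * d G b * (d G a + d G b), by intros; ring⟩ s)
        (e : Sym2 V) := by
    rintro ⟨s, hs⟩
    induction s using Sym2.ind with
    | _ u v =>
      have h : G.Adj u v := hs
      rw [deg_total_inr G u v h ⟨s(u,v), hs⟩ rfl]
      simp only [Sym2.lift_mk]
      rw [pair_sum (fun w => d G w ^ 3) u v h.ne]
      ring
  rw [Finset.sum_congr rfl fun e _ => key e]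
  exact sum_edgeSet G (fun s : Sym2 V => (∑ w, if w ∈ s then d G w ^ 3 else 0)
    + 3 * Sym2.lift ⟨fun a b => d G a * d G b * (d G a + d G b), by intros; ring⟩ s)

theorem stmt6 {V : Type*} [Fintype V] (G : SimpleGraph V) :
    F (total G) = 8 * F G + xi4 G + 3 * ReZG3 G := by
  classical
  rw [F, Fintype.sum_sum_type]
  have h1 : (∑ u : V, d (total G) (Sum.inl u) ^ 3) = 8 * F G := by
    rw [Finset.sum_congr rfl fun u _ => by rw [deg_total_inl], F, Finset.mul_sum]
    exact Finset.sum_congr rfl fun u _ => by ring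
  have h2 : (∑ e : G.edgeSet, d (total G) (Sum.inr e) ^ 3) = xi4 G + 3 * ReZG3 G := by
    rw [sum_inr_cubes, Finset.sum_add_distrib, edge_vertex_sum, ← Finset.mul_sum]
    have hxi : (∑ w, (G.degree w : ℤ) * d G w ^ 3) = xi4 G := by
      rw [xi4]
      exact Finset.sum_congr rfl fun w _ => by rw [d]; ring
    rw [hxi]
    rfl
  rw [h1, h2]; ring

end Paper
end
end

section
/- Let G be a finite simple graph with m edges. The F-coindex of the paraline graph satisfies F̄(PL(G)) = (2m-1)·F(G) - ξ₄(G). -/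
open SimpleGraph Finset
open scoped Classical

noncomputable section
namespace Paper

variable {V : Type*} [Fintype V]

/-! ### Auxiliary lemmas -/

section Aux

/-- Summing `g u + g v` over the edges equals the degree-weighted vertex sum. -/
lemma edgeSum_add {W : Type*} [Fintype W] (H : SimpleGraph W) (g : W → ℤ)
    {f : W → W → ℤ} (hfg : ∀ u v, f u v = g u + g v) (hf : ∀ u v, f u v = f v u) :
    edgeSum H f hf = ∑ v, (H.degree v : ℤ) * g v := by
  classical
  have hlift : Sym2.lift (⟨f, hf⟩ : { f : W → W → ℤ // ∀ a₁ a₂, f a₁ a₂ = f a₂ a₁ })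
      = Sym2.lift ⟨fun u v => g u + g v, by intro u v; ring⟩ := by
    congr 1
    exact Subtype.ext (funext fun u => funext fun v => hfg u v)
  unfold edgeSum
  rw [hlift]
  have h1 : ∑ d : H.Dart, g d.fst
      = ∑ e ∈ H.edgeFinset, Sym2.lift ⟨fun u v => g u + g v, by intro u v; ring⟩ e := by
    rw [← Finset.sum_fiberwise_of_maps_to (g := fun d : H.Dart => d.edge) (t := H.edgeFinset)
      (fun d _ => by rw [mem_edgeFinset]; exact d.edge_mem) (fun d : H.Dart => g d.fst)]
    refine Finset.sum_congr rfl fun e he => ?_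
    rw [mem_edgeFinset] at he
    induction e using Sym2.ind with
    | _ a b =>
      rw [mem_edgeSet] at he
      let dd : H.Dart := ⟨(a, b), he⟩
      have hfib : (univ.filter fun d' : H.Dart => d'.edge = s(a,b)) = {dd, dd.symm} := by
        have := dd.edge_fiber
        exact this
      rw [hfib, Finset.sum_pair dd.symm_ne.symm]
      simp [dd, Sym2.lift_mk]
  have h2 : ∑ d : H.Dart, g d.fst = ∑ v, (H.degree v : ℤ) * g v := by
    rw [← Finset.sum_fiberwise_of_maps_to (g := fun d : H.Dart => d.fst) (t := univ)
      (fun d _ => Finset.mem_univ d.fst) (fun d : H.Dart => g d.fst)]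
    refine Finset.sum_congr rfl fun v _ => ?_
    calc ∑ d ∈ univ.filter (fun d : H.Dart => d.fst = v), g d.fst
        = ∑ d ∈ univ.filter (fun d : H.Dart => d.fst = v), g v :=
          Finset.sum_congr rfl (fun d hd => by rw [(Finset.mem_filter.1 hd).2])
      _ = ↑(H.degree v) * g v := by
          rw [Finset.sum_const, H.dart_fst_fiber_card_eq_degree v, nsmul_eq_mul]
  rw [← h1, h2]

variable (G : SimpleGraph V)

/-- Incidence pairs: a vertex together with an edge containing it. -/
def Inc : Type _ := {p : V × G.edgeSet // p.1 ∈ (p.2 : Sym2 V)}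

instance : Fintype (Inc G) := by unfold Inc; infer_instance

variable {G}

/-- An edge has exactly two endpoints. -/
lemma card_mem_edge (e : G.edgeSet) : Fintype.card {w : V // w ∈ (e : Sym2 V)} = 2 := by
  obtain ⟨e, he⟩ := e
  induction e using Sym2.ind with
  | _ a b =>
    rw [mem_edgeSet] at he
    show Fintype.card {w : V // w ∈ s(a, b)} = 2
    rw [Fintype.card_subtype]
    have h : (univ.filter fun w : V => w ∈ s(a, b)) = {a, b} := by
      ext w; simp [Sym2.mem_iff]
    rw [h, Finset.card_insert_of_notMem (by simp [he.ne]), Finset.card_singleton]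

lemma card_inc_of_vertex (u : V) :
    Fintype.card {e : G.edgeSet // u ∈ (e : Sym2 V)} = G.degree u := by
  rw [← card_incidenceSet_eq_degree]
  refine Fintype.card_congr ?_
  refine { toFun := fun e => ⟨(e.1 : Sym2 V), e.1.2, e.2⟩,
           invFun := fun x => ⟨⟨x.1, x.2.1⟩, x.2.2⟩,
           left_inv := fun e => rfl, right_inv := fun x => rfl }

lemma fiber_fst_card (u : V) :
    #(univ.filter fun q : Inc G => q.1.1 = u) = G.degree u := by
  rw [← Fintype.card_subtype, ← card_inc_of_vertex u]
  refine Fintype.card_congr ?_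
  refine { toFun := fun ⟨⟨⟨v, e'⟩, hv⟩, h⟩ => ⟨e', h ▸ hv⟩,
           invFun := fun e => ⟨⟨(u, e.1), e.2⟩, rfl⟩,
           left_inv := ?_, right_inv := fun e => rfl }
  rintro ⟨⟨⟨v, e⟩, hv⟩, h⟩
  cases h
  rfl

lemma fiber_snd_card (e : G.edgeSet) :
    #(univ.filter fun q : Inc G => q.1.2 = e) = 2 := by
  rw [← Fintype.card_subtype, ← card_mem_edge e]
  refine Fintype.card_congr ?_
  refine { toFun := fun ⟨⟨⟨v, e'⟩, hv⟩, h⟩ => ⟨v, h ▸ hv⟩,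
           invFun := fun w => ⟨⟨(w.1, e), w.2⟩, rfl⟩,
           left_inv := ?_, right_inv := fun w => rfl }
  rintro ⟨⟨⟨v, e'⟩, hv⟩, h⟩
  cases h
  rfl

variable (G)

/-- The bijection between incidence pairs and the edges of the subdivision graph. -/
def incEquiv : Inc G ≃ (subdivision G).edgeSet := by
  refine Equiv.ofBijective
    (fun p => ⟨s(Sum.inl p.1.1, Sum.inr p.1.2), (SimpleGraph.mem_edgeSet _).mpr p.2⟩) ⟨?_, ?_⟩
  · rintro ⟨⟨u, e⟩, hu⟩ ⟨⟨u', e'⟩, hu'⟩ h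
    have h2 : s(Sum.inl u, Sum.inr e) = (s(Sum.inl u', Sum.inr e') : Sym2 (V ⊕ G.edgeSet)) :=
      congrArg Subtype.val h
    rw [Sym2.eq_iff] at h2
    rcases h2 with ⟨h3, h4⟩ | ⟨h3, h4⟩
    · cases Sum.inl.inj h3
      cases Sum.inr.inj h4
      rfl
    · exact absurd h3 (by simp)
  · rintro ⟨s, hs⟩
    induction s using Sym2.ind with
    | _ x y =>
      rw [mem_edgeSet] at hs
      match x, y, hs with
      | Sum.inl u, Sum.inr e, hs =>
        exact ⟨⟨(u, e), hs⟩, Subtype.ext rfl⟩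
      | Sum.inr e, Sum.inl u, hs =>
        exact ⟨⟨(u, e), hs⟩, Subtype.ext (Sym2.eq_swap)⟩

lemma incEquiv_val (p : Inc G) :
    ((incEquiv G p : (subdivision G).edgeSet) : Sym2 (V ⊕ G.edgeSet))
      = s(Sum.inl p.1.1, Sum.inr p.1.2) := rfl

variable {G}

lemma paraline_adj_iff (p q : Inc G) :
    (paraline G).Adj (incEquiv G p) (incEquiv G q)
      ↔ q ≠ p ∧ (q.1.1 = p.1.1 ∨ q.1.2 = p.1.2) := by
  rw [paraline, lineGraph_adj_iff_exists]
  constructor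
  · rintro ⟨hne, z, hz1, hz2⟩
    refine ⟨fun h => hne (by rw [h]), ?_⟩
    rw [incEquiv_val] at hz1 hz2
    rw [Sym2.mem_iff] at hz1 hz2
    rcases hz1 with rfl | rfl <;> rcases hz2 with h | h
    · exact Or.inl (Sum.inl.inj h).symm
    · exact absurd h (by simp)
    · exact absurd h (by simp)
    · exact Or.inr (Sum.inr.inj h).symm
  · rintro ⟨hne, h | h⟩
    · refine ⟨fun hc => hne ((incEquiv G).injective hc.symm), ?_⟩
      exact ⟨Sum.inl p.1.1, by rw [incEquiv_val]; simp, by rw [incEquiv_val]; simp [h]⟩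
    · refine ⟨fun hc => hne ((incEquiv G).injective hc.symm), ?_⟩
      exact ⟨Sum.inr p.1.2, by rw [incEquiv_val]; simp, by rw [incEquiv_val]; simp [h]⟩

lemma paraline_degree (p : Inc G) :
    (paraline G).degree (incEquiv G p) = G.degree p.1.1 := by
  classical
  have h0 : (paraline G).degree (incEquiv G p)
      = #(univ.filter fun x : (subdivision G).edgeSet => (paraline G).Adj (incEquiv G p) x) := by
    rw [← card_neighborFinset_eq_degree, neighborFinset_eq_filter]
  have h1 : #(univ.filter fun x : (subdivision G).edgeSet => (paraline G).Adj (incEquiv G p) x)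
      = #(univ.filter fun q : Inc G => (paraline G).Adj (incEquiv G p) (incEquiv G q)) := by
    rw [← Fintype.card_subtype, ← Fintype.card_subtype]
    exact Fintype.card_congr (((incEquiv G).subtypeEquiv (fun q => Iff.rfl)).symm)
  have h2 : (univ.filter fun q : Inc G => (paraline G).Adj (incEquiv G p) (incEquiv G q))
      = ((univ.filter fun q : Inc G => q.1.1 = p.1.1)
          ∪ (univ.filter fun q : Inc G => q.1.2 = p.1.2)).erase p := by
    ext q
    rw [Finset.mem_erase, Finset.mem_union]
    simp only [Finset.mem_filter, Finset.mem_univ, true_and]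
    rw [paraline_adj_iff]
  have hp : p ∈ ((univ.filter fun q : Inc G => q.1.1 = p.1.1)
          ∪ (univ.filter fun q : Inc G => q.1.2 = p.1.2)) :=
    Finset.mem_union.mpr (Or.inl (Finset.mem_filter.mpr ⟨Finset.mem_univ _, rfl⟩))
  have hinter : ((univ.filter fun q : Inc G => q.1.1 = p.1.1)
      ∩ (univ.filter fun q : Inc G => q.1.2 = p.1.2)) = {p} := by
    ext q
    simp only [Finset.mem_inter, Finset.mem_filter, Finset.mem_univ, true_and,
      Finset.mem_singleton]
    constructor
    · rintro ⟨h1', h2'⟩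
      exact Subtype.ext (Prod.ext h1' h2')
    · rintro rfl
      exact ⟨rfl, rfl⟩
  have hcardunion : #((univ.filter fun q : Inc G => q.1.1 = p.1.1)
          ∪ (univ.filter fun q : Inc G => q.1.2 = p.1.2)) = G.degree p.1.1 + 1 := by
    have := Finset.card_union_add_card_inter
      (univ.filter fun q : Inc G => q.1.1 = p.1.1)
      (univ.filter fun q : Inc G => q.1.2 = p.1.2)
    rw [hinter, Finset.card_singleton, fiber_fst_card, fiber_snd_card] at this
    omega
  rw [h0, h1, h2, Finset.card_erase_of_mem hp, hcardunion]
  omega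

lemma card_Inc_eq : Fintype.card (Inc G) = 2 * #G.edgeFinset := by
  classical
  rw [← Finset.card_univ,
    Finset.card_eq_sum_card_fiberwise (f := fun q : Inc G => q.1.1) (t := univ)
      (fun q _ => Finset.mem_univ _)]
  rw [← G.sum_degrees_eq_twice_card_edges]
  refine Finset.sum_congr rfl fun u _ => fiber_fst_card u

lemma card_subdivision_edgeSet : Fintype.card (subdivision G).edgeSet = 2 * #G.edgeFinset := by
  rw [← Fintype.card_congr (incEquiv G)]
  exact card_Inc_eq

lemma Fbar_eq {W : Type*} [Fintype W] (H : SimpleGraph W) :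
    Fbar H = ∑ v, (Hᶜ.degree v : ℤ) * d H v ^ 2 := by
  have h := edgeSum_add (H := Hᶜ) (g := fun x => d H x ^ 2)
      (f := fun u v => d H u ^ 2 + d H v ^ 2) (fun _ _ => rfl) (by intro u v; ring)
  unfold Fbar
  refine h.trans ?_
  refine Finset.sum_congr rfl fun v _ => ?_
  congr!

lemma Fbar_eq' {W : Type*} [Fintype W] [Nonempty W] (H : SimpleGraph W) :
    Fbar H = ∑ v, ((Fintype.card W : ℤ) - 1 - H.degree v) * (H.degree v : ℤ) ^ 2 := by
  rw [Fbar_eq]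
  refine Finset.sum_congr rfl fun v _ => ?_
  have hlt : H.degree v ≤ Fintype.card W - 1 := by
    have := H.degree_lt_card_verts v
    omega
  have h1 : 1 ≤ Fintype.card W := Fintype.card_pos
  rw [SimpleGraph.degree_compl, Nat.cast_sub hlt, Nat.cast_sub h1, Nat.cast_one]
  have hd : d H v = (H.degree v : ℤ) := by simp only [d]
  rw [hd]

end Aux


set_option maxHeartbeats 1000000 in
theorem stmt15 {V : Type*} [Fintype V] (G : SimpleGraph V) (hm : 1 ≤ m G) :
    Fbar (paraline G) = (2 * m G - 1) * F G - xi4 G := by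
  classical
  have hcard : Fintype.card ↥(subdivision G).edgeSet = 2 * #G.edgeFinset :=
    card_subdivision_edgeSet
  have hm' : 1 ≤ #G.edgeFinset := by
    exact_mod_cast (show (1 : ℤ) ≤ (#G.edgeFinset : ℤ) from hm)
  haveI hne : Nonempty ↥(subdivision G).edgeSet := by
    rw [← Fintype.card_pos_iff]
    omega
  have hC2 : ((Fintype.card ↥(subdivision G).edgeSet : ℕ) : ℤ) = 2 * m G := by
    rw [hcard, m]
    push_cast
    ring
  rw [Fbar_eq', hC2, ← Equiv.sum_comp (incEquiv G)]
  trans (∑ q : Inc G, (2 * m G - 1 - (G.degree q.1.1 : ℤ)) * (G.degree q.1.1 : ℤ) ^ 2)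
  · refine Finset.sum_congr rfl fun q _ => ?_
    rw [paraline_degree]
  rw [← Finset.sum_fiberwise_of_maps_to (g := fun q : Inc G => q.1.1) (t := univ)
    (fun q _ => Finset.mem_univ _)]
  trans (∑ u, (G.degree u : ℤ) * ((2 * m G - 1 - (G.degree u : ℤ)) * (G.degree u : ℤ) ^ 2))
  · refine Finset.sum_congr rfl fun u _ => ?_
    have hcongr : ∀ q ∈ univ.filter (fun q : Inc G => q.1.1 = u),
        (2 * m G - 1 - (G.degree q.1.1 : ℤ)) * (G.degree q.1.1 : ℤ) ^ 2
          = (2 * m G - 1 - (G.degree u : ℤ)) * (G.degree u : ℤ) ^ 2 := fun q hq => by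
      rw [(Finset.mem_filter.1 hq).2]
    rw [Finset.sum_congr rfl hcongr, Finset.sum_const, fiber_fst_card, nsmul_eq_mul]
  trans (∑ u, ((2 * m G - 1) * d G u ^ 3 - d G u ^ 4))
  · refine Finset.sum_congr rfl fun u _ => ?_
    simp only [d]
    ring
  rw [Finset.sum_sub_distrib, ← Finset.mul_sum]
  simp only [F, xi4]

end Paper
end
end
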